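/- Let P, Q ∈ ℤ[T] be polynomials such that Q is nonconstant and squarefree (equivalently, the discriminant of Q is nonzero) and P and Q have no common factor in ℚ[T] (equivalently, the resultant Res(P,Q) is nonzero). Let 𝒫₀ be any finite set of prime numbers. Then there exist a prime number p₀ ∉ 𝒫₀ and a positive integer n such that p₀² divides Q(n) and P(n)Q(n)/p₀² ≡ 1 (mod p₀). In particular, the p₀-adic valuation of Q(n) is exactly 2 and p₀ does not divide P(n). -/

import Mathlib

open Polynomial


lemma clearDenoms (a : ℚ[X]) : ∃ (d : ℤ) (A : ℤ[X]), d ≠ 0 ∧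
    A.map (Int.castRingHom ℚ) = Polynomial.C (d : ℚ) * a := by
  obtain ⟨b, hb⟩ := IsLocalization.integerNormalization_map_to_map (nonZeroDivisors ℤ) a
  refine ⟨(b : ℤ), IsLocalization.integerNormalization (nonZeroDivisors ℤ) a,
    nonZeroDivisors.coe_ne_zero b, ?_⟩
  rw [← algebraMap_int_eq, hb, ← Int.cast_smul_eq_zsmul ℚ, smul_eq_C_mul]

lemma intBezout (P Q : ℤ[X])
    (h : IsCoprime (P.map (Int.castRingHom ℚ)) (Q.map (Int.castRingHom ℚ))) :
    ∃ (A B : ℤ[X]) (r : ℤ), r ≠ 0 ∧ A * P + B * Q = Polynomial.C r := by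
  obtain ⟨u, v, huv⟩ := h
  obtain ⟨du, U, hdu, hU⟩ := clearDenoms u
  obtain ⟨dv, V, hdv, hV⟩ := clearDenoms v
  refine ⟨Polynomial.C dv * U, Polynomial.C du * V, du * dv, mul_ne_zero hdu hdv, ?_⟩
  apply Polynomial.map_injective (Int.castRingHom ℚ)
    (fun a b hab => by simpa using hab)
  rw [Polynomial.map_add, Polynomial.map_mul, Polynomial.map_mul, Polynomial.map_mul,
    Polynomial.map_mul, map_C, map_C, map_C, hU, hV]
  calc (Polynomial.C ((dv:ℚ)) * (Polynomial.C (du:ℚ) * u)) * P.map (Int.castRingHom ℚ)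
        + (Polynomial.C ((du:ℚ)) * (Polynomial.C (dv:ℚ) * v)) * Q.map (Int.castRingHom ℚ)
      = Polynomial.C ((du:ℚ) * dv) * (u * P.map (Int.castRingHom ℚ) + v * Q.map (Int.castRingHom ℚ)) := by
        rw [map_mul]; ring
    _ = Polynomial.C (((du * dv : ℤ) : ℚ)) := by rw [huv, mul_one]; push_cast; ring


lemma squarefree_map (Q : ℤ[X]) (hQsf : Squarefree Q) :
    Squarefree (Q.map (Int.castRingHom ℚ)) := by
  intro w hw
  have hQ0 : Q ≠ 0 := hQsf.ne_zero
  have hmap0 : Q.map (Int.castRingHom ℚ) ≠ 0 := by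
    simpa [Polynomial.map_eq_zero_iff, Int.cast_injective] using hQ0
  have hw0 : w ≠ 0 := by rintro rfl; exact hmap0 (zero_dvd_iff.mp (by simpa using hw))
  -- integer model of w
  obtain ⟨b, hb⟩ := IsLocalization.integerNormalization_map_to_map (nonZeroDivisors ℤ) w
  set N := IsLocalization.integerNormalization (nonZeroDivisors ℤ) w with hN
  have hNne : N ≠ 0 := by
    rw [hN, Ne, IsFractionRing.integerNormalization_eq_zero_iff]; exact hw0
  set g := N.primPart with hg
  have hgprim : g.IsPrimitive := N.isPrimitive_primPart
  have hcontent : N = Polynomial.C N.content * g := N.eq_C_content_mul_primPart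
  have hbne : (b : ℤ) ≠ 0 := nonZeroDivisors.coe_ne_zero b
  have hcne : N.content ≠ 0 := by rwa [Ne, Polynomial.content_eq_zero_iff]
  -- g maps to a unit multiple of w
  have hmapN : N.map (Int.castRingHom ℚ) = Polynomial.C ((b:ℤ):ℚ) * w := by
    rw [hN, ← algebraMap_int_eq, hb, ← Int.cast_smul_eq_zsmul ℚ, smul_eq_C_mul]
  have hmapg : Polynomial.C ((N.content : ℚ)) * g.map (Int.castRingHom ℚ)
      = Polynomial.C ((b:ℤ):ℚ) * w := by
    rw [← hmapN]; conv_rhs => rw [hcontent]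
    rw [Polynomial.map_mul, map_C]; norm_num
  have hassoc : Associated w (g.map (Int.castRingHom ℚ)) := by
    have h1 : Associated (Polynomial.C ((N.content : ℚ)) * g.map (Int.castRingHom ℚ))
        (g.map (Int.castRingHom ℚ)) :=
      associated_unit_mul_left _ _ (Polynomial.isUnit_C.mpr
        (isUnit_iff_ne_zero.mpr (by exact_mod_cast hcne)))
    have h2 : Associated (Polynomial.C (((b:ℤ):ℚ)) * w) w :=
      associated_unit_mul_left _ _ (Polynomial.isUnit_C.mpr
        (isUnit_iff_ne_zero.mpr (by exact_mod_cast hbne)))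
    exact (h2.symm.trans (hmapg ▸ h1))
  -- Q associated to its primitive part over ℚ
  have hQP : Q = Polynomial.C Q.content * Q.primPart := Q.eq_C_content_mul_primPart
  have hQcne : Q.content ≠ 0 := by rwa [Ne, Polynomial.content_eq_zero_iff]
  have hQassoc : Associated (Q.map (Int.castRingHom ℚ))
      ((Q.primPart).map (Int.castRingHom ℚ)) := by
    conv_lhs => rw [hQP]
    rw [Polynomial.map_mul, map_C]
    exact associated_unit_mul_left _ _ (Polynomial.isUnit_C.mpr
      (isUnit_iff_ne_zero.mpr (by simpa using hQcne)))
  -- g * g divides primPart Q over ℚ, hence over ℤ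
  have hgg : (g * g).map (Int.castRingHom ℚ) ∣ (Q.primPart).map (Int.castRingHom ℚ) := by
    rw [Polynomial.map_mul]
    exact ((hassoc.mul_mul hassoc).symm.dvd_iff_dvd_left).mpr
      (hw.trans hQassoc.dvd)
  have hggZ : g * g ∣ Q :=
    ((Polynomial.IsPrimitive.Int.dvd_iff_map_cast_dvd_map_cast _ _
      (hgprim.mul hgprim)).mpr hgg).trans Q.primPart_dvd
  have hu : IsUnit g := hQsf g hggZ
  have : IsUnit (g.map (Int.castRingHom ℚ)) := by
    simpa using hu.map (Polynomial.mapRingHom (Int.castRingHom ℚ))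
  exact hassoc.symm.isUnit this


/-- Schur-type lemma: a nonconstant integer polynomial has a prime divisor of some
value which avoids the divisors of any fixed nonzero integer `m`. -/
lemma exists_good_prime (Q : ℤ[X]) (hQ : 0 < Q.natDegree) (m : ℤ) (hm : m ≠ 0) :
    ∃ (p : ℕ) (n : ℤ), p.Prime ∧ (p:ℤ) ∣ Q.eval n ∧ ¬ (p:ℤ) ∣ m := by
  by_cases hc : Q.eval 0 = 0
  · obtain ⟨p, hple, hp⟩ := Nat.exists_infinite_primes (m.natAbs + 1)
    refine ⟨p, 0, hp, by simp [hc], fun hdvd => ?_⟩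
    have : (p:ℤ) ≤ |m| := Int.le_of_dvd (abs_pos.mpr hm) ((dvd_abs _ _).mpr hdvd)
    have : p ≤ m.natAbs := by exact_mod_cast this.trans_eq (Int.abs_eq_natAbs m)
    omega
  · set c := Q.eval 0 with hcdef
    set B := c * m with hBdef
    have hB : B ≠ 0 := mul_ne_zero hc hm
    have hcB : c * B ≠ 0 := mul_ne_zero hc hB
    set F := Q.comp (Polynomial.C (c * B) * Polynomial.X) with hF
    have hFdeg : 0 < F.natDegree := by
      rw [hF, Polynomial.natDegree_comp, Polynomial.natDegree_C_mul_X _ hcB]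
      simpa using hQ
    -- the set of x where |F.eval x| ≤ |c| is finite
    have hfin : (⋃ y ∈ Finset.Icc (-|c|) |c|, {x : ℤ | (F - Polynomial.C y).IsRoot x}).Finite := by
      apply Set.Finite.biUnion (Finset.Icc (-|c|) |c|).finite_toSet
      intro y _
      apply Polynomial.finite_setOf_isRoot
      intro h0
      have : (F - Polynomial.C y).natDegree = F.natDegree := Polynomial.natDegree_sub_C
      rw [h0] at this
      simp at this; omega
    obtain ⟨x, hx⟩ := (Set.Finite.infinite_compl hfin).nonempty
    have hxval : |c| < |F.eval x| := by
      by_contra hle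
      push_neg at hle
      apply hx
      refine Set.mem_iUnion₂.mpr ⟨F.eval x, ?_, ?_⟩
      · simp only [Finset.mem_coe, Finset.mem_Icc]
        constructor <;> [exact neg_le_of_abs_le (by linarith [abs_nonneg (F.eval x), neg_abs_le (F.eval x)]); skip]
        · exact le_of_abs_le hle
      · simp [Polynomial.IsRoot]
    -- value decomposition
    have hFx : F.eval x = Q.eval (c * B * x) := by
      simp [hF, Polynomial.eval_comp]
    obtain ⟨t, ht⟩ : (c * B * x) ∣ (Q.eval (c * B * x) - c) := by
      simpa using Polynomial.sub_dvd_eval_sub (c * B * x) 0 Q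
    set K := 1 + B * x * t with hK
    have hdK : Q.eval (c * B * x) = c * K := by
      rw [hK]; linear_combination ht
    have hKabs : 1 < |K| := by
      rw [hFx, hdK, abs_mul] at hxval
      nlinarith [abs_nonneg K, abs_nonneg c, abs_pos.mpr hc]
    have hKne1 : K.natAbs ≠ 1 := by
      rw [Int.abs_eq_natAbs] at hKabs; omega
    obtain ⟨q, hq, hqK⟩ := Int.exists_prime_and_dvd hKne1
    refine ⟨q.natAbs, c * B * x, Int.prime_iff_natAbs_prime.mp hq, ?_, ?_⟩
    · rw [hdK]
      exact Dvd.dvd.mul_left ((Int.natAbs_dvd).mpr hqK) c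
    · intro hqm
      have hqB : (q.natAbs:ℤ) ∣ B := by
        rw [hBdef]; exact Dvd.dvd.mul_left hqm c
      have : (q.natAbs:ℤ) ∣ 1 := by
        have h1 : (q.natAbs:ℤ) ∣ K := (Int.natAbs_dvd).mpr hqK
        have h2 : (q.natAbs:ℤ) ∣ B * x * t := (hqB.mul_right x).mul_right t
        have := h1.sub h2
        simpa [hK] using this
      have := Int.eq_one_of_dvd_one (by positivity) this
      have hq2 := (Int.prime_iff_natAbs_prime.mp hq).two_le
      omega

lemma solve_lin (p : ℕ) (hp : p.Prime) (a c d : ℤ) (ha : ¬ (p:ℤ) ∣ a) :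
    ∃ t : ℤ, (p:ℤ) ∣ (c + t * a - d) := by
  haveI : Fact p.Prime := ⟨hp⟩
  have haz : (a : ZMod p) ≠ 0 := by
    rwa [Ne, ZMod.intCast_zmod_eq_zero_iff_dvd]
  set z : ZMod p := ((d : ZMod p) - c) * (a : ZMod p)⁻¹ with hz
  refine ⟨(z.val : ℤ), ?_⟩
  rw [← ZMod.intCast_zmod_eq_zero_iff_dvd]
  push_cast
  rw [ZMod.natCast_val, ZMod.cast_id]
  rw [hz, mul_assoc, inv_mul_cancel₀ haz]
  ring


/-- Manduchi's lemma: if `Q ∈ ℤ[T]` is nonconstant and squarefree and `P ∈ ℤ[T]` is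
coprime to `Q` over `ℚ`, then for any finite set `𝒫₀` of primes there are a prime
`p₀ ∉ 𝒫₀` and a positive integer `n` with `p₀² ∣ Q(n)` and
`P(n)Q(n)/p₀² ≡ 1 (mod p₀)`; in particular `ν_{p₀}(Q(n)) = 2` and `p₀ ∤ P(n)`. -/
theorem stmt_0 (P Q : Polynomial ℤ)
    (hQdeg : 0 < Q.natDegree) (hQsf : Squarefree Q)
    (hPQ : IsCoprime (P.map (Int.castRingHom ℚ)) (Q.map (Int.castRingHom ℚ)))
    (𝒫₀ : Finset ℕ) :
    ∃ (p₀ n : ℕ), p₀.Prime ∧ p₀ ∉ 𝒫₀ ∧ 0 < n ∧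
      (p₀ : ℤ) ^ 2 ∣ Q.eval (n : ℤ) ∧
      (P.eval (n : ℤ) * Q.eval (n : ℤ)) / (p₀ : ℤ) ^ 2 ≡ 1 [ZMOD (p₀ : ℤ)] ∧
      padicValInt p₀ (Q.eval (n : ℤ)) = 2 ∧
      ¬ (p₀ : ℤ) ∣ P.eval (n : ℤ) := by
  obtain ⟨A₁, B₁, r₁, hr₁, hBez₁⟩ := intBezout P Q hPQ
  have hsep : (Q.map (Int.castRingHom ℚ)).Separable :=
    PerfectField.separable_iff_squarefree.mpr (squarefree_map Q hQsf)
  have hQQ' : IsCoprime (Q.map (Int.castRingHom ℚ))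
      ((Q.derivative).map (Int.castRingHom ℚ)) := by
    have := hsep
    rwa [Polynomial.Separable, Polynomial.derivative_map] at this
  obtain ⟨A₂, B₂, r₂, hr₂, hBez₂⟩ := intBezout Q Q.derivative hQQ'
  set m : ℤ := r₁ * r₂ * ∏ q ∈ 𝒫₀.erase 0, (q:ℤ) with hm
  have hmne : m ≠ 0 := by
    refine mul_ne_zero (mul_ne_zero hr₁ hr₂) ?_
    rw [Finset.prod_ne_zero_iff]
    intro q hq
    exact Int.natCast_ne_zero.mpr (Finset.ne_of_mem_erase hq)
  obtain ⟨p, n₁, hp, hpQ1, hpm⟩ := exists_good_prime Q hQdeg m hmne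
  haveI : Fact p.Prime := ⟨hp⟩
  have hpne : (p:ℤ) ≠ 0 := Int.natCast_ne_zero.mpr hp.ne_zero
  have hpprime : Prime (p:ℤ) := Nat.prime_iff_prime_int.mp hp
  have hp𝒫 : p ∉ 𝒫₀ := by
    intro hmem
    apply hpm
    have : (p:ℤ) ∣ ∏ q ∈ 𝒫₀.erase 0, (q:ℤ) :=
      Finset.dvd_prod_of_mem _ (Finset.mem_erase.mpr ⟨hp.ne_zero, hmem⟩)
    exact this.mul_left _
  have hpnot1 : ¬ (p:ℤ) ∣ 1 := by
    intro h
    have h1 := Int.eq_one_of_dvd_one (by positivity) h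
    have := hp.one_lt
    omega
  have key₁ : ∀ x : ℤ, (p:ℤ) ∣ Q.eval x → ¬ (p:ℤ) ∣ P.eval x := by
    intro x hx hP
    apply hpm
    have heval : A₁.eval x * P.eval x + B₁.eval x * Q.eval x = r₁ := by
      have := congrArg (Polynomial.eval x) hBez₁; simpa using this
    have hpr : (p:ℤ) ∣ r₁ := by
      rw [← heval]; exact dvd_add (hP.mul_left _) (hx.mul_left _)
    exact (hpr.mul_right r₂).mul_right _
  have key₂ : ∀ x : ℤ, (p:ℤ) ∣ Q.eval x → ¬ (p:ℤ) ∣ Q.derivative.eval x := by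
    intro x hx hD
    apply hpm
    have heval : A₂.eval x * Q.eval x + B₂.eval x * Q.derivative.eval x = r₂ := by
      have := congrArg (Polynomial.eval x) hBez₂; simpa using this
    have hpr : (p:ℤ) ∣ r₂ := by
      rw [← heval]; exact dvd_add (hx.mul_left _) (hD.mul_left _)
    exact (hpr.mul_left r₁).mul_right _
  -- Step 1 : lift to p²
  obtain ⟨a, ha⟩ := hpQ1
  have hQ'1 : ¬ (p:ℤ) ∣ Q.derivative.eval n₁ := key₂ n₁ ⟨a, ha⟩
  obtain ⟨t, ht⟩ := solve_lin p hp (Q.derivative.eval n₁) a 0 hQ'1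
  have ht' : (p:ℤ) ∣ a + t * Q.derivative.eval n₁ := by simpa using ht
  obtain ⟨e, he⟩ := ht'
  obtain ⟨k, hk⟩ := Q.binomExpansion n₁ (t * p)
  set n₂ := n₁ + t * (p:ℤ) with hn₂
  have hQn₂ : (p:ℤ)^2 ∣ Q.eval n₂ := by
    rw [hn₂, hk, ha]
    exact ⟨e + k * t^2, by linear_combination (p:ℤ) * he⟩
  have hQ'2 : ¬ (p:ℤ) ∣ Q.derivative.eval n₂ := by
    intro h
    apply hQ'1
    have hdd : (p:ℤ) ∣ Q.derivative.eval n₂ - Q.derivative.eval n₁ :=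
      Dvd.dvd.trans ⟨t, by rw [hn₂]; ring⟩
        (Polynomial.sub_dvd_eval_sub n₂ n₁ Q.derivative)
    have := h.sub hdd
    simpa using this
  have hPn₂ : ¬ (p:ℤ) ∣ P.eval n₂ :=
    key₁ n₂ ((dvd_pow_self (p:ℤ) two_ne_zero).trans hQn₂)
  obtain ⟨b, hb⟩ := hQn₂
  -- Step 2 : adjust the quotient mod p
  have hPQ'ne : ¬ (p:ℤ) ∣ P.eval n₂ * Q.derivative.eval n₂ := by
    intro h
    rcases hpprime.dvd_mul.mp h with h' | h'
    exacts [hPn₂ h', hQ'2 h']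
  obtain ⟨s, hs⟩ := solve_lin p hp (P.eval n₂ * Q.derivative.eval n₂)
    (P.eval n₂ * b) 1 hPQ'ne
  obtain ⟨k', hk'⟩ := Q.binomExpansion n₂ (s * (p:ℤ)^2)
  set n₃ := n₂ + s * (p:ℤ)^2 with hn₃
  set c₀ := b + s * Q.derivative.eval n₂ + k' * s^2 * (p:ℤ)^2 with hc₀
  have hQn₃ : Q.eval n₃ = (p:ℤ)^2 * c₀ := by
    rw [hn₃, hk', hb, hc₀]; ring
  -- shift to a positive argument
  set u : ℤ := |n₃| + 1 with hu
  set N : ℤ := n₃ + u * (p:ℤ)^3 with hNdef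
  have hp1 : (1:ℤ) ≤ (p:ℤ) := by exact_mod_cast hp.one_lt.le
  have hNpos : 0 < N := by
    have h1 : (1:ℤ) ≤ (p:ℤ)^3 := one_le_pow₀ hp1
    have h2 : u ≤ u * (p:ℤ)^3 := le_mul_of_one_le_right (by positivity) h1
    have h3 := neg_abs_le n₃
    rw [hNdef, hu] at *
    nlinarith [abs_nonneg n₃]
  obtain ⟨w, hw⟩ := Polynomial.sub_dvd_eval_sub N n₃ Q
  set Cf : ℤ := c₀ + (p:ℤ) * (u * w) with hCf
  have hQN : Q.eval N = (p:ℤ)^2 * Cf := by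
    have h1 : Q.eval N = Q.eval n₃ + (N - n₃) * w := by linarith [hw]
    have h2 : N - n₃ = u * (p:ℤ)^3 := by rw [hNdef]; ring
    rw [h1, h2, hQn₃, hCf]; ring
  have hPcong : (p:ℤ) ∣ P.eval N - P.eval n₂ := by
    have h1 : (p:ℤ) ∣ N - n₂ := by
      refine ⟨s * p + u * (p:ℤ)^2, ?_⟩
      rw [hNdef, hn₃]; ring
    exact h1.trans (Polynomial.sub_dvd_eval_sub _ _ P)
  have hmain : (p:ℤ) ∣ P.eval N * Cf - 1 := by
    have h2 : (p:ℤ) ∣ Cf - (b + s * Q.derivative.eval n₂) :=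
      ⟨k' * s^2 * p + u * w, by rw [hCf, hc₀]; ring⟩
    obtain ⟨e1, he1⟩ := hs
    obtain ⟨e2, he2⟩ := hPcong
    obtain ⟨e3, he3⟩ := h2
    exact ⟨e1 + e2 * Cf + P.eval n₂ * e3,
      by linear_combination he1 + Cf * he2 + P.eval n₂ * he3⟩
  have hpPN : ¬ (p:ℤ) ∣ P.eval N := by
    intro h
    exact hpnot1 (by simpa using (h.mul_right Cf).sub hmain)
  have hpCf : ¬ (p:ℤ) ∣ Cf := by
    intro h
    exact hpnot1 (by simpa using (h.mul_left (P.eval N)).sub hmain)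
  have hQNne : Q.eval N ≠ 0 := by
    rw [hQN]
    exact mul_ne_zero (pow_ne_zero _ hpne) (fun h => hpCf (h ▸ dvd_zero _))
  have hNcast : ((N.toNat : ℕ) : ℤ) = N := Int.toNat_of_nonneg hNpos.le
  refine ⟨p, N.toNat, hp, hp𝒫, by omega, ?_, ?_, ?_, ?_⟩
  · rw [hNcast, hQN]; exact ⟨Cf, rfl⟩
  · rw [hNcast]
    have hdiv : P.eval N * Q.eval N / (p:ℤ)^2 = P.eval N * Cf := by
      rw [hQN, show P.eval N * ((p:ℤ)^2 * Cf) = (p:ℤ)^2 * (P.eval N * Cf) by ring,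
        Int.mul_ediv_cancel_left _ (pow_ne_zero 2 hpne)]
    rw [hdiv]
    exact Int.modEq_iff_dvd.mpr (by rw [← neg_sub]; exact dvd_neg.mpr hmain)
  · rw [hNcast]
    have h2le : 2 ≤ padicValInt p (Q.eval N) :=
      ((padicValInt_dvd_iff 2 (Q.eval N)).mp ⟨Cf, hQN⟩).resolve_left hQNne
    have h3 : ¬ (p:ℤ)^3 ∣ Q.eval N := by
      intro h
      apply hpCf
      rw [hQN, show ((p:ℤ)^3) = (p:ℤ)^2 * p by ring] at h
      exact (mul_dvd_mul_iff_left (pow_ne_zero 2 hpne)).mp h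
    have h3le : ¬ (3 ≤ padicValInt p (Q.eval N)) := fun hle =>
      h3 ((padicValInt_dvd_iff 3 (Q.eval N)).mpr (Or.inr hle))
    omega
  · rw [hNcast]; exact hpPN
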